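/- The group S_∞ of all bijections of ℕ, equipped with the topology of pointwise convergence, is amenable: every continuous action of S_∞ on a nonempty compact Hausdorff space admits an invariant regular Borel probability measure. -/

import Mathlib

open MeasureTheory Filter Topology Set NNReal ENNReal BoundedContinuousFunction TopologicalSpace

noncomputable section
namespace S9

instance permTop : TopologicalSpace (Equiv.Perm ℕ) :=
  TopologicalSpace.induced (fun σ : Equiv.Perm ℕ => (σ : ℕ → ℕ)) Pi.topologicalSpace

/-- permutations fixing everything ≥ n -/
def Fixed (n : ℕ) : Set (Equiv.Perm ℕ) := {g | ∀ k, n ≤ k → g k = k}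

lemma one_mem_Fixed (n : ℕ) : (1 : Equiv.Perm ℕ) ∈ Fixed n := fun _ _ => rfl

lemma Fixed_mono {m n : ℕ} (h : m ≤ n) : Fixed m ⊆ Fixed n :=
  fun _ hg k hk => hg k (h.trans hk)

lemma inv_mem_Fixed {n : ℕ} {g : Equiv.Perm ℕ} (hg : g ∈ Fixed n) : g⁻¹ ∈ Fixed n := by
  intro k hk
  conv_lhs => rw [← hg k hk]
  exact g.symm_apply_apply k

lemma mul_mem_Fixed {n : ℕ} {g h : Equiv.Perm ℕ} (hg : g ∈ Fixed n) (hh : h ∈ Fixed n) :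
    g * h ∈ Fixed n := by
  intro k hk
  have : (g * h) k = g (h k) := rfl
  rw [this, hh k hk, hg k hk]

lemma lt_of_mem_Fixed {n : ℕ} {g : Equiv.Perm ℕ} (hg : g ∈ Fixed n) {k : ℕ} (hk : k < n) :
    g k < n := by
  by_contra h
  push_neg at h
  have h2 := inv_mem_Fixed hg (g k) h
  have h3 : g⁻¹ (g k) = k := g.symm_apply_apply k
  omega

lemma Fixed_finite (n : ℕ) : (Fixed n).Finite := by
  set f : Equiv.Perm ℕ → (Fin n → Fin n) := fun g i => if h : g i < n then ⟨g i, h⟩ else i with hf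
  have : Set.InjOn f (Fixed n) := by
    intro g hg g' hg' hgg'
    ext k
    rcases lt_or_ge k n with hk | hk
    · have h1 : f g ⟨k, hk⟩ = f g' ⟨k, hk⟩ := by rw [hgg']
      have e1 : g k < n := lt_of_mem_Fixed hg hk
      have e2 : g' k < n := lt_of_mem_Fixed hg' hk
      simp only [hf, dif_pos e1, dif_pos e2, Fin.mk.injEq] at h1
      exact h1
    · rw [hg k hk, hg' k hk]
  exact Set.Finite.of_finite_image (Set.toFinite _) this

/-- the Følner finsets -/
def A (n : ℕ) : Finset (Equiv.Perm ℕ) := (Fixed_finite n).toFinset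

lemma mem_A {n : ℕ} {g : Equiv.Perm ℕ} : g ∈ A n ↔ g ∈ Fixed n := Set.Finite.mem_toFinset _

lemma A_nonempty (n : ℕ) : (A n).Nonempty := ⟨1, mem_A.2 (one_mem_Fixed n)⟩

/-- left translation by an element of `Fixed n` permutes `A n` -/
lemma sum_A_mul {n : ℕ} {g : Equiv.Perm ℕ} (hg : g ∈ Fixed n) (φ : Equiv.Perm ℕ → ℝ≥0) :
    ∑ h ∈ A n, φ (g * h) = ∑ h ∈ A n, φ h := by
  apply Finset.sum_nbij' (fun h => g * h) (fun h => g⁻¹ * h)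
  · intro h hh; exact mem_A.2 (mul_mem_Fixed hg (mem_A.1 hh))
  · intro h hh; exact mem_A.2 (mul_mem_Fixed (inv_mem_Fixed hg) (mem_A.1 hh))
  · intro h _; group
  · intro h _; group
  · intro h _; rfl

lemma swap_mem_Fixed (a b : ℕ) : Equiv.swap a b ∈ Fixed (max a b + 1) := by
  intro k hk
  exact Equiv.swap_apply_of_ne_of_ne (by omega) (by omega)

/-- finitary approximations to an arbitrary permutation -/
def approx (g : Equiv.Perm ℕ) : ℕ → Equiv.Perm ℕ
  | 0 => 1
  | m + 1 => approx g m * Equiv.swap m ((approx g m)⁻¹ (g m))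

lemma approx_agree (g : Equiv.Perm ℕ) : ∀ m, ∀ i < m, approx g m i = g i := by
  intro m
  induction m with
  | zero => omega
  | succ m ih =>
    intro i hi
    set a := approx g m with ha
    set t := a⁻¹ (g m) with ht
    have key : approx g (m+1) i = a (Equiv.swap m t i) := rfl
    rcases Nat.lt_or_ge i m with him | him
    · have hit : i ≠ t := by
        intro h
        have : a i = g m := by rw [h, ht]; exact a.apply_symm_apply (g m)
        rw [ih i him] at this
        have := g.injective this
        omega
      rw [key, Equiv.swap_apply_of_ne_of_ne (by omega) hit]
      exact ih i him
    · have him' : i = m := by omega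
      rw [key, him', Equiv.swap_apply_left, ht]
      exact a.apply_symm_apply (g m)

lemma approx_finitary (g : Equiv.Perm ℕ) (m : ℕ) : ∃ n, approx g m ∈ Fixed n := by
  induction m with
  | zero => exact ⟨0, fun _ _ => rfl⟩
  | succ m ih =>
    obtain ⟨n, hn⟩ := ih
    set a := approx g m
    set t := a⁻¹ (g m)
    refine ⟨max n (max m t + 1), ?_⟩
    intro k hk
    have h1 : Equiv.swap m t k = k := swap_mem_Fixed m t k (by omega)
    have : approx g (m+1) k = a (Equiv.swap m t k) := rfl
    rw [this, h1]
    exact hn k (by omega)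

lemma approx_tendsto (g : Equiv.Perm ℕ) : Tendsto (approx g) atTop (𝓝 g) := by
  rw [nhds_induced, tendsto_comap_iff]
  rw [tendsto_pi_nhds]
  intro i
  apply Tendsto.congr' (f₁ := fun _ => g i)
  · filter_upwards [eventually_ge_atTop (i+1)] with m hm
    exact (approx_agree g m i (by omega)).symm
  · exact tendsto_const_nhds


def UF : Ultrafilter ℕ := Ultrafilter.of atTop

lemma UF_le : (UF : Filter ℕ) ≤ atTop := Ultrafilter.of_le atTop

section RieszAux
variable {Y : Type*} [TopologicalSpace Y]
variable (Λ : (Y →ᵇ ℝ≥0) →ₗ[ℝ≥0] ℝ≥0)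

def rieszContentAux : Compacts Y → ℝ≥0 := fun K =>
  sInf (Λ '' { f : Y →ᵇ ℝ≥0 | ∀ x ∈ K, (1 : ℝ≥0) ≤ f x })

theorem rieszContentAux_image_nonempty (K : Compacts Y) :
    (Λ '' { f : Y →ᵇ ℝ≥0 | ∀ x ∈ K, (1 : ℝ≥0) ≤ f x }).Nonempty :=
  ⟨Λ 1, 1, fun x _ => by simp, rfl⟩

theorem rieszContentAux_mono {K₁ K₂ : Compacts Y} (h : K₁ ≤ K₂) :
    rieszContentAux Λ K₁ ≤ rieszContentAux Λ K₂ :=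
  csInf_le_csInf (OrderBot.bddBelow _) (rieszContentAux_image_nonempty Λ K₂)
    (image_mono (setOf_subset_setOf.mpr fun _ f_hyp x x_in_K₁ => f_hyp x (h x_in_K₁)))

theorem rieszContentAux_le {K : Compacts Y} {f : Y →ᵇ ℝ≥0} (h : ∀ x ∈ K, (1 : ℝ≥0) ≤ f x) :
    rieszContentAux Λ K ≤ Λ f :=
  csInf_le (OrderBot.bddBelow _) ⟨f, ⟨h, rfl⟩⟩

theorem exists_lt_rieszContentAux_add_pos (K : Compacts Y) {ε : ℝ≥0} (εpos : 0 < ε) :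
    ∃ f : Y →ᵇ ℝ≥0, (∀ x ∈ K, (1 : ℝ≥0) ≤ f x) ∧ Λ f < rieszContentAux Λ K + ε := by
  obtain ⟨α, ⟨⟨f, f_hyp⟩, α_hyp⟩⟩ :=
    exists_lt_of_csInf_lt (rieszContentAux_image_nonempty Λ K)
      (lt_add_of_pos_right (rieszContentAux Λ K) εpos)
  refine ⟨f, f_hyp.left, ?_⟩
  rw [f_hyp.right]
  exact α_hyp

theorem rieszContentAux_sup_le (K1 K2 : Compacts Y) :
    rieszContentAux Λ (K1 ⊔ K2) ≤ rieszContentAux Λ K1 + rieszContentAux Λ K2 := by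
  apply _root_.le_of_forall_pos_le_add
  intro ε εpos
  obtain ⟨f1, f_test_function_K1⟩ := exists_lt_rieszContentAux_add_pos Λ K1 (half_pos εpos)
  obtain ⟨f2, f_test_function_K2⟩ := exists_lt_rieszContentAux_add_pos Λ K2 (half_pos εpos)
  have f_test_function_union : ∀ x ∈ K1 ⊔ K2, (1 : ℝ≥0) ≤ (f1 + f2 : Y →ᵇ ℝ≥0) x := by
    rintro x (x_in_K1 | x_in_K2)
    · exact le_add_right (f_test_function_K1.left x x_in_K1)
    · exact le_add_left (f_test_function_K2.left x x_in_K2)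
  apply (rieszContentAux_le Λ f_test_function_union).trans (le_of_lt _)
  rw [map_add]
  apply lt_of_lt_of_le (_root_.add_lt_add f_test_function_K1.right f_test_function_K2.right)
    (le_of_eq _)
  rw [add_assoc, add_comm (ε / 2), add_assoc, add_halves ε, add_assoc]

end RieszAux

section Main
variable {X : Type} [TopologicalSpace X] [CompactSpace X] [T2Space X]
variable (act : Equiv.Perm ℕ → X → X) (x₀ : X)

/-- the Følner averages -/
def Lam_n (n : ℕ) (f : X →ᵇ ℝ≥0) : ℝ≥0 := (∑ h ∈ A n, f (act h x₀)) / (A n).card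

lemma Lam_n_add (n : ℕ) (f g : X →ᵇ ℝ≥0) :
    Lam_n act x₀ n (f + g) = Lam_n act x₀ n f + Lam_n act x₀ n g := by
  unfold Lam_n
  rw [← add_div]
  congr 1
  rw [← Finset.sum_add_distrib]
  rfl

lemma Lam_n_smul (n : ℕ) (c : ℝ≥0) (f : X →ᵇ ℝ≥0) :
    Lam_n act x₀ n (c • f) = c * Lam_n act x₀ n f := by
  unfold Lam_n
  simp only [BoundedContinuousFunction.coe_smul, Pi.smul_apply, smul_eq_mul, ← Finset.mul_sum,
    mul_div_assoc]

lemma Lam_n_mono (n : ℕ) {f g : X →ᵇ ℝ≥0} (h : ∀ x, f x ≤ g x) :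
    Lam_n act x₀ n f ≤ Lam_n act x₀ n g := by
  unfold Lam_n
  gcongr with i hi
  exact h _

lemma Lam_n_one (n : ℕ) : Lam_n act x₀ n 1 = 1 := by
  unfold Lam_n
  simp only [BoundedContinuousFunction.coe_one, Pi.one_apply]
  rw [Finset.sum_const, nsmul_eq_mul, mul_one]
  rw [div_self]
  simpa using Finset.card_ne_zero_of_mem (A_nonempty n).choose_spec

lemma Lam_n_const (n : ℕ) (c : ℝ≥0) :
    Lam_n act x₀ n (BoundedContinuousFunction.const X c) = c := by
  unfold Lam_n
  simp only [BoundedContinuousFunction.const_apply]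
  rw [Finset.sum_const, nsmul_eq_mul]
  rw [mul_comm, mul_div_assoc, div_self, mul_one]
  simpa using Finset.card_ne_zero_of_mem (A_nonempty n).choose_spec

lemma Lam_n_bound (n : ℕ) {f : X →ᵇ ℝ≥0} {C : ℝ≥0} (hC : ∀ x, f x ≤ C) :
    Lam_n act x₀ n f ≤ C := by
  calc Lam_n act x₀ n f ≤ Lam_n act x₀ n (BoundedContinuousFunction.const X C) :=
        Lam_n_mono act x₀ n (fun x => by simpa using hC x)
    _ = C := Lam_n_const act x₀ n C

lemma exists_lim (f : X →ᵇ ℝ≥0) :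
    ∃ c, Tendsto (fun n => Lam_n act x₀ n f) (UF : Filter ℕ) (𝓝 c) := by
  obtain ⟨z, -, hz⟩ := IsCompact.exists_isMaxOn isCompact_univ ⟨x₀, trivial⟩
    f.continuous.continuousOn
  have hmem : ∀ n, Lam_n act x₀ n f ∈ Set.Icc 0 (f z) := fun n =>
    ⟨zero_le, Lam_n_bound act x₀ n (fun x => hz (Set.mem_univ x))⟩
  have hle : (UF.map (fun n => Lam_n act x₀ n f) : Filter ℝ≥0) ≤ 𝓟 (Set.Icc 0 (f z)) := by
    rw [Filter.le_principal_iff]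
    exact Filter.mem_map.2 (Filter.univ_mem' hmem)
  obtain ⟨c, -, hc⟩ := isCompact_Icc.ultrafilter_le_nhds (UF.map fun n => Lam_n act x₀ n f) hle
  exact ⟨c, hc⟩

/-- the limiting functional -/
def Lam0 (f : X →ᵇ ℝ≥0) : ℝ≥0 := (exists_lim act x₀ f).choose

lemma Lam0_spec (f : X →ᵇ ℝ≥0) :
    Tendsto (fun n => Lam_n act x₀ n f) (UF : Filter ℕ) (𝓝 (Lam0 act x₀ f)) :=
  (exists_lim act x₀ f).choose_spec

lemma Lam0_add (f g : X →ᵇ ℝ≥0) :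
    Lam0 act x₀ (f + g) = Lam0 act x₀ f + Lam0 act x₀ g := by
  refine tendsto_nhds_unique (Lam0_spec act x₀ (f + g)) ?_
  have := (Lam0_spec act x₀ f).add (Lam0_spec act x₀ g)
  simpa only [← Lam_n_add] using this

lemma Lam0_smul (c : ℝ≥0) (f : X →ᵇ ℝ≥0) :
    Lam0 act x₀ (c • f) = c * Lam0 act x₀ f := by
  refine tendsto_nhds_unique (Lam0_spec act x₀ (c • f)) ?_
  have := (Lam0_spec act x₀ f).const_mul c
  simpa only [← Lam_n_smul] using this

lemma Lam0_mono {f g : X →ᵇ ℝ≥0} (h : ∀ x, f x ≤ g x) :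
    Lam0 act x₀ f ≤ Lam0 act x₀ g :=
  le_of_tendsto_of_tendsto' (Lam0_spec act x₀ f) (Lam0_spec act x₀ g)
    (fun n => Lam_n_mono act x₀ n h)

lemma Lam0_one : Lam0 act x₀ 1 = 1 := by
  refine tendsto_nhds_unique (Lam0_spec act x₀ 1) ?_
  simpa only [Lam_n_one] using (tendsto_const_nhds : Tendsto (fun _ : ℕ => (1:ℝ≥0)) _ _)

lemma Lam0_const (c : ℝ≥0) : Lam0 act x₀ (BoundedContinuousFunction.const X c) = c := by
  refine tendsto_nhds_unique (Lam0_spec act x₀ _) ?_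
  simpa only [Lam_n_const] using (tendsto_const_nhds : Tendsto (fun _ : ℕ => c) _ _)


variable (hcont : Continuous fun p : Equiv.Perm ℕ × X => act p.1 p.2)

include hcont in
lemma act_cont (g : Equiv.Perm ℕ) : Continuous (act g) :=
  hcont.comp (continuous_const.prodMk continuous_id)

/-- composition with the action as a map on bounded continuous functions -/
def cf (g : Equiv.Perm ℕ) (f : X →ᵇ ℝ≥0) : X →ᵇ ℝ≥0 :=
  f.compContinuous ⟨act g, act_cont act hcont g⟩

@[simp] lemma cf_apply (g : Equiv.Perm ℕ) (f : X →ᵇ ℝ≥0) (x : X) :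
    cf act hcont g f x = f (act g x) := rfl

lemma Lam0_cf_finitary (hactm : ∀ g h x, act (g * h) x = act g (act h x))
    {m : ℕ} {g : Equiv.Perm ℕ} (hg : g ∈ Fixed m) (f : X →ᵇ ℝ≥0) :
    Lam0 act x₀ (cf act hcont g f) = Lam0 act x₀ f := by
  refine tendsto_nhds_unique (Lam0_spec act x₀ (cf act hcont g f)) ?_
  refine (Lam0_spec act x₀ f).congr' ?_
  have hmem : {n : ℕ | m ≤ n} ∈ (UF : Filter ℕ) := UF_le (mem_atTop m)
  filter_upwards [hmem] with n hn
  unfold Lam_n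
  congr 1
  calc ∑ h ∈ A n, f (act h x₀) = ∑ h ∈ A n, (fun h' => f (act h' x₀)) (g * h) :=
        (sum_A_mul (Fixed_mono hn hg) _).symm
    _ = ∑ h ∈ A n, cf act hcont g f (act h x₀) := by
        refine Finset.sum_congr rfl fun h _ => ?_
        simp only [cf_apply]
        rw [hactm]

include hcont in
lemma eventually_close (f : X →ᵇ ℝ≥0) (g : Equiv.Perm ℕ) {ε : ℝ≥0} (hε : 0 < ε) :
    ∀ᶠ g' in 𝓝 g, ∀ x, f (act g' x) ≤ f (act g x) + ε ∧ f (act g x) ≤ f (act g' x) + ε := by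
  set F : Equiv.Perm ℕ × X → ℝ≥0 := fun p => f (act p.1 p.2) with hFdef
  have hF : Continuous F := f.continuous.comp hcont
  set G : Equiv.Perm ℕ × X → ℝ≥0 := fun p => f (act g p.2) with hGdef
  have hG : Continuous G := (f.continuous.comp hcont).comp
    (continuous_const.prodMk continuous_snd)
  set W : Set (Equiv.Perm ℕ × X) := {p | F p < G p + ε ∧ G p < F p + ε} with hWdef
  have hW : IsOpen W := by
    apply IsOpen.inter
    · exact isOpen_lt (NNReal.continuous_coe.comp hF)
        (NNReal.continuous_coe.comp (hG.add continuous_const))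
    · exact isOpen_lt (NNReal.continuous_coe.comp hG)
        (NNReal.continuous_coe.comp (hF.add continuous_const))
  have hsub : ({g} ×ˢ (Set.univ : Set X)) ⊆ W := by
    rintro ⟨g', x⟩ ⟨hg', -⟩
    simp only [Set.mem_singleton_iff] at hg'
    subst hg'
    exact ⟨lt_add_of_pos_right _ hε, lt_add_of_pos_right _ hε⟩
  obtain ⟨u, v, hu, hv, hgu, hXv, huv⟩ :=
    generalized_tube_lemma isCompact_singleton isCompact_univ hW hsub
  have hunhds : u ∈ 𝓝 g := hu.mem_nhds (hgu rfl)
  filter_upwards [hunhds] with g' hg' x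
  have : (g', x) ∈ W := huv ⟨hg', hXv trivial⟩
  exact ⟨this.1.le, this.2.le⟩

lemma Lam0_cf (hactm : ∀ g h x, act (g * h) x = act g (act h x)) (g : Equiv.Perm ℕ)
    (f : X →ᵇ ℝ≥0) : Lam0 act x₀ (cf act hcont g f) = Lam0 act x₀ f := by
  have key : ∀ ε : ℝ≥0, 0 < ε →
      Lam0 act x₀ (cf act hcont g f) ≤ Lam0 act x₀ f + ε ∧
      Lam0 act x₀ f ≤ Lam0 act x₀ (cf act hcont g f) + ε := by
    intro ε hε
    obtain ⟨m, hm⟩ := ((approx_tendsto g).eventually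
      (eventually_close act hcont f g hε)).exists
    obtain ⟨k, hk⟩ := approx_finitary g m
    set g' := approx g m
    have h1 : Lam0 act x₀ (cf act hcont g f) ≤ Lam0 act x₀ (cf act hcont g' f) + ε := by
      calc Lam0 act x₀ (cf act hcont g f)
          ≤ Lam0 act x₀ (cf act hcont g' f + BoundedContinuousFunction.const X ε) := by
            refine Lam0_mono act x₀ fun x => ?_
            simp only [BoundedContinuousFunction.add_apply, cf_apply,
              BoundedContinuousFunction.const_apply]
            exact (hm x).2
        _ = Lam0 act x₀ (cf act hcont g' f) + ε := by
            rw [Lam0_add, Lam0_const]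
    have h2 : Lam0 act x₀ (cf act hcont g' f) ≤ Lam0 act x₀ (cf act hcont g f) + ε := by
      calc Lam0 act x₀ (cf act hcont g' f)
          ≤ Lam0 act x₀ (cf act hcont g f + BoundedContinuousFunction.const X ε) := by
            refine Lam0_mono act x₀ fun x => ?_
            simp only [BoundedContinuousFunction.add_apply, cf_apply,
              BoundedContinuousFunction.const_apply]
            exact (hm x).1
        _ = Lam0 act x₀ (cf act hcont g f) + ε := by
            rw [Lam0_add, Lam0_const]
    have hfin := Lam0_cf_finitary act x₀ hcont hactm hk f
    rw [hfin] at h1 h2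
    exact ⟨h1, h2⟩
  refine le_antisymm ?_ ?_
  · exact _root_.le_of_forall_pos_le_add fun ε hε => (key ε hε).1
  · exact _root_.le_of_forall_pos_le_add fun ε hε => (key ε hε).2

-- ======= new material =======

/-- the limiting functional as a linear map -/
def Lam : (X →ᵇ ℝ≥0) →ₗ[ℝ≥0] ℝ≥0 where
  toFun := Lam0 act x₀
  map_add' := Lam0_add act x₀
  map_smul' := fun c f => by simpa using Lam0_smul act x₀ c f

lemma Lam_apply (f : X →ᵇ ℝ≥0) : Lam act x₀ f = Lam0 act x₀ f := rfl

/-- disjoint additivity of the Riesz content -/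
lemma riesz_sup_disjoint (K₁ K₂ : Compacts X) (hd : Disjoint (K₁ : Set X) K₂) :
    rieszContentAux (Lam act x₀) (K₁ ⊔ K₂) =
      rieszContentAux (Lam act x₀) K₁ + rieszContentAux (Lam act x₀) K₂ := by
  refine le_antisymm (rieszContentAux_sup_le _ K₁ K₂) ?_
  obtain ⟨φ, hφ0, hφ1, hφ01⟩ :=
    exists_continuous_zero_one_of_isClosed K₂.2.isClosed K₁.2.isClosed hd.symm
  set ψ₁ : X →ᵇ ℝ≥0 := BoundedContinuousFunction.mkOfCompact
    ⟨fun x => Real.toNNReal (φ x), continuous_real_toNNReal.comp φ.continuous⟩ with hψ₁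
  set ψ₂ : X →ᵇ ℝ≥0 := BoundedContinuousFunction.mkOfCompact
    ⟨fun x => Real.toNNReal (1 - φ x),
      continuous_real_toNNReal.comp (continuous_const.sub φ.continuous)⟩ with hψ₂
  have hψadd : ∀ x, ψ₁ x + ψ₂ x = 1 := by
    intro x
    have h01 := hφ01 x
    have : (↑(ψ₁ x + ψ₂ x) : ℝ) = 1 := by
      push_cast
      simp only [hψ₁, hψ₂, BoundedContinuousFunction.mkOfCompact_apply, ContinuousMap.coe_mk]
      rw [Real.coe_toNNReal _ h01.1, Real.coe_toNNReal _ (by linarith [h01.2])]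
      ring
    exact_mod_cast this
  -- lower bound
  refine le_csInf (rieszContentAux_image_nonempty (Lam act x₀) (K₁ ⊔ K₂)) ?_
  rintro b ⟨f, hf, rfl⟩
  -- the two pieces
  set p₁ : X →ᵇ ℝ≥0 := BoundedContinuousFunction.mkOfCompact
    ⟨fun x => f x * ψ₁ x, f.continuous.mul ψ₁.continuous⟩ with hp₁
  set p₂ : X →ᵇ ℝ≥0 := BoundedContinuousFunction.mkOfCompact
    ⟨fun x => f x * ψ₂ x, f.continuous.mul ψ₂.continuous⟩ with hp₂
  have hsum : p₁ + p₂ = f := by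
    ext x
    simp only [hp₁, hp₂, BoundedContinuousFunction.add_apply,
      BoundedContinuousFunction.mkOfCompact_apply, ContinuousMap.coe_mk]
    rw [← mul_add, hψadd x, mul_one]
  have h₁ : rieszContentAux (Lam act x₀) K₁ ≤ Lam act x₀ p₁ := by
    apply rieszContentAux_le
    intro x hx
    have hψx : ψ₁ x = 1 := by
      simp only [hψ₁, BoundedContinuousFunction.mkOfCompact_apply, ContinuousMap.coe_mk]
      rw [hφ1 hx]
      simp
    simp only [hp₁, BoundedContinuousFunction.mkOfCompact_apply, ContinuousMap.coe_mk, hψx,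
      mul_one]
    exact hf x (Set.mem_union_left _ hx)
  have h₂ : rieszContentAux (Lam act x₀) K₂ ≤ Lam act x₀ p₂ := by
    apply rieszContentAux_le
    intro x hx
    have hψx : ψ₂ x = 1 := by
      simp only [hψ₂, BoundedContinuousFunction.mkOfCompact_apply, ContinuousMap.coe_mk]
      rw [hφ0 hx]
      simp
    simp only [hp₂, BoundedContinuousFunction.mkOfCompact_apply, ContinuousMap.coe_mk, hψx,
      mul_one]
    exact hf x (Set.mem_union_right _ hx)
  calc rieszContentAux (Lam act x₀) K₁ + rieszContentAux (Lam act x₀) K₂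
      ≤ Lam act x₀ p₁ + Lam act x₀ p₂ := add_le_add h₁ h₂
    _ = Lam act x₀ (p₁ + p₂) := (map_add _ _ _).symm
    _ = Lam act x₀ f := by rw [hsum]

/-- the Riesz content associated to `Lam` -/
def rContent : MeasureTheory.Content X where
  toFun := rieszContentAux (Lam act x₀)
  mono' := fun _ _ h => rieszContentAux_mono (Lam act x₀) h
  sup_disjoint' := fun K₁ K₂ hd _ _ => riesz_sup_disjoint act x₀ K₁ K₂ hd
  sup_le' := rieszContentAux_sup_le (Lam act x₀)

lemma rContent_apply (K : Compacts X) :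
    rContent act x₀ K = (rieszContentAux (Lam act x₀) K : ℝ≥0∞) := rfl

lemma rContent_top : rieszContentAux (Lam act x₀) ⊤ = 1 := by
  refine le_antisymm ?_ ?_
  · have := rieszContentAux_le (Lam act x₀) (K := ⊤) (f := 1) (fun x _ => by simp)
    calc rieszContentAux (Lam act x₀) ⊤ ≤ Lam act x₀ 1 := this
      _ = 1 := Lam0_one act x₀
  · refine le_csInf (rieszContentAux_image_nonempty (Lam act x₀) ⊤) ?_
    rintro b ⟨f, hf, rfl⟩
    calc (1 : ℝ≥0) = Lam act x₀ 1 := (Lam0_one act x₀).symm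
      _ ≤ Lam act x₀ f := Lam0_mono act x₀ (f := (1 : X →ᵇ ℝ≥0)) (g := f) (fun x => by simpa using hf x trivial)

-- ===== new material =====
variable (hact1 : ∀ x, act 1 x = x) (hactm : ∀ g h x, act (g * h) x = act g (act h x))

include hact1 hactm in
lemma act_inv_cancel (g : Equiv.Perm ℕ) (x : X) : act g⁻¹ (act g x) = x := by
  rw [← hactm, inv_mul_cancel, hact1]

/-- the action homeomorphism -/
def eAct (g : Equiv.Perm ℕ) : X ≃ₜ X where
  toFun := act g
  invFun := act g⁻¹
  left_inv := fun x => act_inv_cancel act hact1 hactm g x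
  right_inv := fun x => by
    have := act_inv_cancel act hact1 hactm g⁻¹ x
    rwa [inv_inv] at this
  continuous_toFun := act_cont act hcont g
  continuous_invFun := act_cont act hcont g⁻¹

lemma rc_invariant (g : Equiv.Perm ℕ) :
    ∀ ⦃K : Compacts X⦄, rContent act x₀ (K.map (eAct act hcont hact1 hactm g)
      (eAct act hcont hact1 hactm g).continuous) = rContent act x₀ K := by
  intro K
  rw [rContent_apply, rContent_apply]
  norm_cast
  have key : ∀ (σ : Equiv.Perm ℕ) (K' : Compacts X),
      rieszContentAux (Lam act x₀) (K'.map (eAct act hcont hact1 hactm σ)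
        (eAct act hcont hact1 hactm σ).continuous) ≤ rieszContentAux (Lam act x₀) K' := by
    intro σ K'
    refine le_csInf (rieszContentAux_image_nonempty (Lam act x₀) K') ?_
    rintro b ⟨f, hf, rfl⟩
    have htest : ∀ y ∈ (K'.map (eAct act hcont hact1 hactm σ)
        (eAct act hcont hact1 hactm σ).continuous), (1:ℝ≥0) ≤ (cf act hcont σ⁻¹ f) y := by
      rintro y hy
      obtain ⟨x, hx, rfl⟩ := hy
      have : act σ⁻¹ ((eAct act hcont hact1 hactm σ) x) = x :=
        act_inv_cancel act hact1 hactm σ x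
      rw [cf_apply, this]
      exact hf x hx
    calc rieszContentAux (Lam act x₀) (K'.map _ _) ≤ Lam act x₀ (cf act hcont σ⁻¹ f) :=
          rieszContentAux_le (Lam act x₀) htest
      _ = Lam act x₀ f := by rw [Lam_apply, Lam_apply]; exact Lam0_cf act x₀ hcont hactm σ⁻¹ f
  refine le_antisymm (key g K) ?_
  have h2 := key g⁻¹ (K.map (eAct act hcont hact1 hactm g)
    (eAct act hcont hact1 hactm g).continuous)
  have himg : ((K.map (eAct act hcont hact1 hactm g)
      (eAct act hcont hact1 hactm g).continuous).map (eAct act hcont hact1 hactm g⁻¹)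
      (eAct act hcont hact1 hactm g⁻¹).continuous) = K := by
    ext x
    simp only [Compacts.coe_map, Set.mem_image, ← Set.image_comp]
    constructor
    · rintro ⟨y, hy, rfl⟩
      have : act g⁻¹ (act g y) = y := act_inv_cancel act hact1 hactm g y
      simpa [eAct, this] using hy
    · intro hx
      refine ⟨x, hx, ?_⟩
      exact act_inv_cancel act hact1 hactm g x
  rwa [himg] at h2

variable [MeasurableSpace X] [BorelSpace X] [Nonempty X]

include hcont hact1 hactm in
theorem main : ∃ μ : MeasureTheory.Measure X, MeasureTheory.IsProbabilityMeasure μ ∧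
    μ.Regular ∧ ∀ (g : Equiv.Perm ℕ) (B : Set X), MeasurableSet B → μ (act g ⁻¹' B) = μ B := by
  classical
  set x₀ : X := Classical.arbitrary X
  set μ := (rContent act x₀).measure with hμ
  have hμreg : μ.Regular := MeasureTheory.Content.regular _
  have huniv : μ Set.univ = 1 := by
    rw [hμ, MeasureTheory.Content.measure_apply _ MeasurableSet.univ,
      MeasureTheory.Content.outerMeasure_of_isOpen _ Set.univ isOpen_univ]
    have : (rContent act x₀).innerContent ⟨Set.univ, isOpen_univ⟩ = rContent act x₀ ⊤ := by
      refine le_antisymm ?_ ?_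
      · refine iSup_le fun K => iSup_le fun _ => ?_
        exact (rContent act x₀).mono K ⊤ (Set.subset_univ _)
      · exact (rContent act x₀).le_innerContent ⊤ _ (Set.subset_univ _)
    rw [this, rContent_apply, rContent_top]
    norm_cast
  refine ⟨μ, ⟨huniv⟩, hμreg, ?_⟩
  intro g B hB
  have hpre : act g ⁻¹' B = (eAct act hcont hact1 hactm g) ⁻¹' B := rfl
  have hpm : MeasurableSet (act g ⁻¹' B) := hB.preimage (act_cont act hcont g).measurable
  rw [hμ, MeasureTheory.Content.measure_apply _ hpm, MeasureTheory.Content.measure_apply _ hB,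
    hpre]
  exact (rContent act x₀).outerMeasure_preimage (eAct act hcont hact1 hactm g)
    (rc_invariant act x₀ hcont hact1 hactm g) B

end Main
end S9
end

open MeasureTheory in
theorem stmt_9 :
    letI : TopologicalSpace (Equiv.Perm ℕ) :=
      TopologicalSpace.induced (fun σ : Equiv.Perm ℕ => (σ : ℕ → ℕ)) Pi.topologicalSpace
    ∀ (X : Type) [TopologicalSpace X] [CompactSpace X] [T2Space X] [Nonempty X]
      [MeasurableSpace X] [BorelSpace X],
      ∀ act : Equiv.Perm ℕ → X → X,
        (∀ x, act 1 x = x) →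
        (∀ g h x, act (g * h) x = act g (act h x)) →
        (Continuous fun p : Equiv.Perm ℕ × X => act p.1 p.2) →
        ∃ μ : Measure X, IsProbabilityMeasure μ ∧ μ.Regular ∧
          ∀ (g : Equiv.Perm ℕ) (B : Set X), MeasurableSet B → μ (act g ⁻¹' B) = μ B := by
  intro X _ _ _ _ _ _ act hact1 hactm hcont
  exact S9.main act hcont hact1 hactm
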